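/- Let φ: {0,1}* → {0,1}* be a primitive morphism which is conjugated to a morphism in Class P_ret (i.e., there exist a morphism ψ in Class P_ret and a word x with ψ(a)x = xφ(a) for every letter a, or φ(a)x = xψ(a) for every letter a). If u ∈ {0,1}^ℕ is a fixed point of φ, i.e., φ(u) = u, then the language L(u) is closed under reversal. -/

import Mathlib

open List

/-- Apply a morphism (given by its values on letters) to a finite word. -/
def applyM {A : Type*} (φ : A → List A) (v : List A) : List A := v.flatMap φ

/-- The set of occurrences of `w` as a factor of `u`:
indices `i` such that the block of `u` of length `|w|` starting at `i` equals `w`. -/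
def occs {A : Type*} [DecidableEq A] (w u : List A) : Finset ℕ :=
  (Finset.range (u.length + 1)).filter
    (fun i => i + w.length ≤ u.length ∧ (u.drop i).take w.length = w)

/-- A morphism `φ` belongs to Class `P_ret` with marker `w` if it is injective on
letters, `w` is a palindrome, and for each letter `a` the word `φ(a)w` is a palindrome
in which `w` occurs exactly twice, namely as a prefix (position `0`) and as a suffix
(position `|φ(a)|`, distinct from `0`). -/
def IsPretWithMarker {A : Type*} [DecidableEq A] (φ : A → List A) (w : List A) : Prop :=
  Function.Injective φ ∧ w.reverse = w ∧
    ∀ a : A, (φ a ++ w).reverse = φ a ++ w ∧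
      occs w (φ a ++ w) = {0, (φ a).length} ∧ (φ a).length ≠ 0

/-- The block of length `len` of the infinite word `u` starting at position `i`. -/
def factorAt {A : Type*} (u : ℕ → A) (i len : ℕ) : List A :=
  (List.range len).map fun k => u (i + k)

/-- `i` is an occurrence of the finite word `v` in the infinite word `u`. -/
def OccursAt {A : Type*} (u : ℕ → A) (v : List A) (i : ℕ) : Prop :=
  factorAt u i v.length = v

/-- `v` belongs to the language of the infinite word `u`, i.e. `v` is a factor of `u`. -/
def InLang {A : Type*} (u : ℕ → A) (v : List A) : Prop := ∃ i, OccursAt u v i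

/-- The image `φ(u) = φ(u₀)φ(u₁)φ(u₂)⋯` of an infinite word `u` under a
(non-erasing) morphism `φ`, as an infinite word. -/
def applyInf {A : Type*} (φ : A → List A) (u : ℕ → A) (n : ℕ) : A :=
  (((List.range (n + 1)).flatMap fun i => φ (u i))).getD n (u 0)

/-- The language of `u` is closed under reversal. -/
def ClosedUnderReversal {A : Type*} (u : ℕ → A) : Prop :=
  ∀ v : List A, InLang u v → InLang u v.reverse

/-- A finite word is rich if its number of palindromic factors (including `ε`)
equals its length plus one. -/
def RichWord {A : Type*} (u : List A) : Prop :=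
  {p : List A | p <:+: u ∧ p.reverse = p}.ncard = u.length + 1

/-- An infinite word is rich if all its finite prefixes are rich. -/
def RichInf {A : Type*} (u : ℕ → A) : Prop := ∀ n : ℕ, RichWord (factorAt u 0 n)

/-- An infinite word is recurrent if each of its factors occurs infinitely often. -/
def Recurrent {A : Type*} (u : ℕ → A) : Prop :=
  ∀ v : List A, InLang u v → ∀ N : ℕ, ∃ i, N ≤ i ∧ OccursAt u v i

/-- `r` is a return word to `w` in the infinite word `u`: `wr ∈ L(u)` and `w`
occurs in `wr` exactly twice, as a prefix and as a suffix. -/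
def IsReturnWord {A : Type*} [DecidableEq A] (u : ℕ → A) (w r : List A) : Prop :=
  r ≠ [] ∧ InLang u (w ++ r) ∧ occs w (w ++ r) = {0, r.length}

/-- Left extensions of `x` in the language of `u`. -/
def leftExt {A : Type*} (u : ℕ → A) (x : List A) : Set A := {a | InLang u (a :: x)}

/-- Right extensions of `x` in the language of `u`. -/
def rightExt {A : Type*} (u : ℕ → A) (x : List A) : Set A := {b | InLang u (x ++ [b])}

/-- Bi-extensions of `x` in the language of `u`. -/
def biExt {A : Type*} (u : ℕ → A) (x : List A) : Set (A × A) :=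
  {p | InLang u (p.1 :: (x ++ [p.2]))}

/-- `x` is bispecial in `u`. -/
def Bispecial {A : Type*} (u : ℕ → A) (x : List A) : Prop :=
  2 ≤ (leftExt u x).ncard ∧ 2 ≤ (rightExt u x).ncard

/-- The bilateral order `b_u(x) = #B_u(x) − #L_u(x) − #R_u(x) + 1`. -/
noncomputable def bilateralOrder {A : Type*} (u : ℕ → A) (x : List A) : ℤ :=
  ((biExt u x).ncard : ℤ) - (leftExt u x).ncard - (rightExt u x).ncard + 1

/-- The number of palindromic extensions of `x` in `u`. -/
noncomputable def pext {A : Type*} (u : ℕ → A) (x : List A) : ℕ :=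
  {a | InLang u (a :: (x ++ [a]))}.ncard

/-- Arnoux-Rauzy morphisms: the monoid of morphisms generated by permutations of the
alphabet and by the elementary morphisms `ψ_a : a ↦ a, b ↦ ab` and `ψ̄_a : a ↦ a, b ↦ ba`. -/
inductive IsAR {A : Type*} [DecidableEq A] : (A → List A) → Prop
  | perm (π : Equiv.Perm A) : IsAR (fun a => [π a])
  | psiL (a : A) : IsAR (fun b => if b = a then [a] else [a, b])
  | psiR (a : A) : IsAR (fun b => if b = a then [a] else [b, a])
  | comp {φ ψ : A → List A} : IsAR φ → IsAR ψ → IsAR (fun a => applyM φ (ψ a))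

/-- The `k`-th power `φ^k` of a morphism. -/
def powM {A : Type*} (φ : A → List A) : ℕ → A → List A
  | 0, a => [a]
  | n + 1, a => applyM (powM φ n) (φ a)

/-- A morphism is primitive if some power of it maps every letter to a word
containing every letter. -/
def PrimitiveM {A : Type*} (φ : A → List A) : Prop :=
  ∃ k : ℕ, ∀ a b : A, b ∈ powM φ k a

/-- A (acyclic) morphism is marked: it has a rightmost conjugate `φR` whose
last-letter map is injective, and a leftmost conjugate `φL` whose first-letter map
is injective. -/
def Marked {A : Type*} (φ : A → List A) : Prop :=
  ∃ (φR φL : A → List A) (x y : List A),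
    (∀ a, φ a ++ x = x ++ φR a) ∧
    (∀ a, φL a ++ y = y ++ φ a) ∧
    (∃ a b : A, (φR a).getLast? ≠ (φR b).getLast?) ∧
    (∃ a b : A, (φL a).head? ≠ (φL b).head?) ∧
    Function.Injective (fun c => (φR c).getLast?) ∧
    Function.Injective (fun c => (φL c).head?)

namespace PretAux

variable {A : Type*}

lemma applyM_nil (φ : A → List A) : applyM φ ([] : List A) = [] := rfl

lemma applyM_cons (φ : A → List A) (a : A) (v : List A) :
    applyM φ (a :: v) = φ a ++ applyM φ v := rfl

lemma applyM_append (φ : A → List A) (v w : List A) :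
    applyM φ (v ++ w) = applyM φ v ++ applyM φ w := List.flatMap_append

lemma applyM_singleton (φ : A → List A) (a : A) : applyM φ [a] = φ a := by
  simp [applyM]

lemma applyM_applyM (φ g : A → List A) (v : List A) :
    applyM φ (applyM g v) = v.flatMap (fun a => applyM φ (g a)) :=
  List.flatMap_assoc

lemma applyM_id (v : List A) : applyM (fun a => [a]) v = v := by
  induction v with
  | nil => rfl
  | cons a t ih => simp [applyM_cons, ih]

lemma le_length_applyM (φ : A → List A) (h : ∀ a, φ a ≠ []) (v : List A) :
    v.length ≤ (applyM φ v).length := by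
  induction v with
  | nil => simp [applyM_nil]
  | cons a t ih =>
      have h1 : 0 < (φ a).length := List.length_pos_iff.mpr (h a)
      simp only [applyM_cons, List.length_append, List.length_cons]
      omega

lemma applyM_ne_nil (φ : A → List A) (h : ∀ a, φ a ≠ []) {v : List A} (hv : v ≠ []) :
    applyM φ v ≠ [] := by
  have h1 := le_length_applyM φ h v
  have hv' : 0 < v.length := List.length_pos_iff.mpr hv
  exact List.length_pos_iff.mp (lt_of_lt_of_le hv' h1)

lemma two_mul_le_length_applyM (g : A → List A) (h : ∀ a, 2 ≤ (g a).length) (v : List A) :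
    2 * v.length ≤ (applyM g v).length := by
  induction v with
  | nil => simp [applyM_nil]
  | cons a t ih =>
      have := h a
      simp only [applyM_cons, List.length_append, List.length_cons]
      omega

lemma powM_zero (φ : A → List A) (a : A) : powM φ 0 a = [a] := rfl

lemma applyM_powM_zero (φ : A → List A) (v : List A) : applyM (powM φ 0) v = v :=
  applyM_id v

lemma powM_succ_applyM (φ : A → List A) (n : ℕ) (v : List A) :
    applyM (powM φ (n + 1)) v = applyM (powM φ n) (applyM φ v) := by
  show v.flatMap (powM φ (n+1)) = (v.flatMap φ).flatMap (powM φ n)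
  rw [List.flatMap_assoc]
  rfl

lemma powM_succ' (φ : A → List A) (n : ℕ) (a : A) :
    powM φ (n + 1) a = applyM φ (powM φ n a) := by
  induction n generalizing a with
  | zero => simp [powM, applyM_id, applyM_singleton]
  | succ n ih =>
      show applyM (powM φ (n+1)) (φ a) = applyM φ (powM φ (n+1) a)
      have : applyM (powM φ (n+1)) (φ a) = (φ a).flatMap (fun b => applyM φ (powM φ n b)) := by
        show (φ a).flatMap (powM φ (n+1)) = _
        congr 1
        funext b
        exact ih b
      rw [this]
      show _ = applyM φ (applyM (powM φ n) (φ a))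
      rw [applyM_applyM]

lemma applyM_powM_succ' (φ : A → List A) (n : ℕ) (v : List A) :
    applyM (powM φ (n + 1)) v = applyM φ (applyM (powM φ n) v) := by
  rw [applyM_applyM]
  show v.flatMap (powM φ (n+1)) = _
  congr 1
  funext a
  exact powM_succ' φ n a

lemma powM_add (φ : A → List A) (m n : ℕ) (a : A) :
    powM φ (m + n) a = applyM (powM φ m) (powM φ n a) := by
  induction n generalizing a with
  | zero => simp [powM_zero, applyM_singleton]
  | succ n ih =>
      show applyM (powM φ (m+n)) (φ a) = applyM (powM φ m) (applyM (powM φ n) (φ a))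
      rw [applyM_applyM]
      show (φ a).flatMap (powM φ (m+n)) = (φ a).flatMap (fun b => applyM (powM φ m) (powM φ n b))
      congr 1
      funext b
      exact ih b

lemma powM_ne_nil (φ : A → List A) (h : ∀ a, φ a ≠ []) (n : ℕ) (a : A) :
    powM φ n a ≠ [] := by
  induction n generalizing a with
  | zero => simp [powM_zero]
  | succ n ih =>
      rw [powM_succ']
      exact applyM_ne_nil φ h (ih a)

lemma le_length_powM (φ : A → List A) (h : ∀ a, φ a ≠ []) (n : ℕ) (v : List A) :
    v.length ≤ (applyM (powM φ n) v).length :=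
  le_length_applyM _ (fun a => powM_ne_nil φ h n a) v

end PretAux

namespace PretAux

variable {A : Type*}

lemma pre_of_conj {x l r : List A} (h : x ++ l = r ++ x) (hl : x.length ≤ r.length) :
    x <+: r := by
  have h1 : x = (r ++ x).take x.length := by
    rw [← h]; simp
  rw [List.take_append_of_le_length hl] at h1
  exact h1 ▸ List.take_prefix x.length r

lemma suf_of_conj {x l r : List A} (h : x ++ l = r ++ x) (hl : x.length ≤ l.length) :
    x <:+ l := by
  have h' : l.reverse ++ x.reverse = x.reverse ++ r.reverse := by
    have := congrArg List.reverse h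
    simpa [List.reverse_append] using this
  have := pre_of_conj h'.symm (by simpa using hl)
  exact List.reverse_prefix.mp this

lemma prefix_of_prefix_append {l l' : List A} (h : l <+: l' ++ l) (hl : l.length ≤ l'.length) :
    l <+: l' := by
  obtain ⟨r, hr⟩ := h
  exact pre_of_conj hr hl

lemma applyM_conj {f g : A → List A} {x : List A} (h : ∀ a, f a ++ x = x ++ g a) :
    ∀ v, applyM f v ++ x = x ++ applyM g v := by
  intro v
  induction v with
  | nil => simp [applyM_nil]
  | cons a t ih =>
      calc applyM f (a :: t) ++ x = f a ++ (applyM f t ++ x) := by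
            simp [applyM_cons, List.append_assoc]
        _ = f a ++ (x ++ applyM g t) := by rw [ih]
        _ = (f a ++ x) ++ applyM g t := by simp [List.append_assoc]
        _ = (x ++ g a) ++ applyM g t := by rw [h a]
        _ = x ++ applyM g (a :: t) := by simp [applyM_cons, List.append_assoc]

lemma powM_conj {f g : A → List A} {x : List A} (h : ∀ a, f a ++ x = x ++ g a) (n : ℕ) :
    ∃ z : List A, ∀ v, applyM (powM f n) v ++ z = z ++ applyM (powM g n) v := by
  induction n with
  | zero =>
      exact ⟨[], fun v => by simp [applyM_powM_zero]⟩
  | succ n ih =>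
      obtain ⟨z, hz⟩ := ih
      refine ⟨applyM (powM f n) x ++ z, fun v => ?_⟩
      calc applyM (powM f (n+1)) v ++ (applyM (powM f n) x ++ z)
          = (applyM (powM f n) (applyM f v) ++ applyM (powM f n) x) ++ z := by
            rw [powM_succ_applyM]; simp [List.append_assoc]
        _ = applyM (powM f n) (applyM f v ++ x) ++ z := by rw [applyM_append]
        _ = applyM (powM f n) (x ++ applyM g v) ++ z := by rw [applyM_conj h]
        _ = applyM (powM f n) x ++ (applyM (powM f n) (applyM g v) ++ z) := by
            rw [applyM_append]; simp [List.append_assoc]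
        _ = applyM (powM f n) x ++ (z ++ applyM (powM g n) (applyM g v)) := by rw [hz]
        _ = (applyM (powM f n) x ++ z) ++ applyM (powM g (n+1)) v := by
            rw [powM_succ_applyM]; simp [List.append_assoc]

section Marker

variable {ψ : A → List A} {w : List A}

lemma rev_word (hw : w.reverse = w) (hkey : ∀ a, ψ a ++ w = w ++ (ψ a).reverse) :
    ∀ v : List A, (applyM ψ v ++ w).reverse = applyM ψ v.reverse ++ w := by
  intro v
  induction v with
  | nil => simp [applyM_nil, hw]
  | cons a t ih =>
      calc (applyM ψ (a :: t) ++ w).reverse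
          = ((ψ a) ++ (applyM ψ t ++ w)).reverse := by simp [applyM_cons, List.append_assoc]
        _ = (applyM ψ t ++ w).reverse ++ (ψ a).reverse := by simp [List.reverse_append]
        _ = (applyM ψ t.reverse ++ w) ++ (ψ a).reverse := by rw [ih]
        _ = applyM ψ t.reverse ++ (w ++ (ψ a).reverse) := by simp [List.append_assoc]
        _ = applyM ψ t.reverse ++ (ψ a ++ w) := by rw [← hkey a]
        _ = (applyM ψ t.reverse ++ ψ a) ++ w := by simp [List.append_assoc]
        _ = applyM ψ (t.reverse ++ [a]) ++ w := by rw [applyM_append, applyM_singleton]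
        _ = applyM ψ (a :: t).reverse ++ w := by simp

lemma w_pre (hkey : ∀ a, ψ a ++ w = w ++ (ψ a).reverse) :
    ∀ v : List A, w <+: applyM ψ v ++ w := by
  intro v
  induction v with
  | nil => simp [applyM_nil]
  | cons a t ih =>
      obtain ⟨r, hr⟩ := ih
      refine ⟨(ψ a).reverse ++ r, ?_⟩
      calc w ++ ((ψ a).reverse ++ r) = (w ++ (ψ a).reverse) ++ r := by simp [List.append_assoc]
        _ = (ψ a ++ w) ++ r := by rw [← hkey a]
        _ = ψ a ++ (w ++ r) := by simp [List.append_assoc]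
        _ = ψ a ++ (applyM ψ t ++ w) := by rw [hr]
        _ = applyM ψ (a :: t) ++ w := by simp [applyM_cons, List.append_assoc]

lemma marker_pow (hw : w.reverse = w) (hkey : ∀ a, ψ a ++ w = w ++ (ψ a).reverse) (n : ℕ) :
    ∃ wn : List A,
      (∀ v : List A, (applyM (powM ψ n) v ++ wn).reverse = applyM (powM ψ n) v.reverse ++ wn) ∧
      (∀ v : List A, wn <+: applyM (powM ψ n) v ++ wn) := by
  induction n with
  | zero =>
      refine ⟨[], fun v => by simp [applyM_powM_zero], fun v => by simp⟩
  | succ n ih =>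
      obtain ⟨wn, ihrev, ihpre⟩ := ih
      refine ⟨applyM (powM ψ n) w ++ wn, ?_, ?_⟩
      · intro v
        calc (applyM (powM ψ (n+1)) v ++ (applyM (powM ψ n) w ++ wn)).reverse
            = (applyM (powM ψ n) (applyM ψ v ++ w) ++ wn).reverse := by
              rw [powM_succ_applyM, applyM_append]; simp [List.append_assoc]
          _ = applyM (powM ψ n) (applyM ψ v ++ w).reverse ++ wn := ihrev _
          _ = applyM (powM ψ n) (applyM ψ v.reverse ++ w) ++ wn := by
              rw [rev_word hw hkey]
          _ = applyM (powM ψ (n+1)) v.reverse ++ (applyM (powM ψ n) w ++ wn) := by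
              rw [applyM_append, powM_succ_applyM]; simp [List.append_assoc]
      · intro v
        obtain ⟨r, hr⟩ := w_pre hkey v
        obtain ⟨s, hs⟩ := ihpre r
        refine ⟨s, ?_⟩
        calc (applyM (powM ψ n) w ++ wn) ++ s
            = applyM (powM ψ n) w ++ (wn ++ s) := by simp [List.append_assoc]
          _ = applyM (powM ψ n) w ++ (applyM (powM ψ n) r ++ wn) := by rw [hs]
          _ = applyM (powM ψ n) (w ++ r) ++ wn := by
              rw [applyM_append]; simp [List.append_assoc]
          _ = applyM (powM ψ n) (applyM ψ v ++ w) ++ wn := by rw [← hr]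
          _ = applyM (powM ψ (n+1)) v ++ (applyM (powM ψ n) w ++ wn) := by
              rw [applyM_append, powM_succ_applyM]; simp [List.append_assoc]

end Marker

end PretAux

namespace PretAux

variable {A : Type*}

lemma factorAt_length (u : ℕ → A) (i len : ℕ) : (factorAt u i len).length = len := by
  simp [factorAt]

lemma factorAt_getElem (u : ℕ → A) (i len k : ℕ) (h : k < len) :
    (factorAt u i len)[k]'(by simp [factorAt_length, h]) = u (i + k) := by
  simp [factorAt]

lemma factorAt_append (u : ℕ → A) (i a b : ℕ) :
    factorAt u i (a + b) = factorAt u i a ++ factorAt u (i + a) b := by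
  apply List.ext_getElem
  · simp [factorAt_length]
  · intro n h1 h2
    have hn : n < a + b := by simpa [factorAt_length] using h1
    rw [factorAt_getElem u i (a + b) n hn]
    rcases lt_or_ge n a with h | h
    · rw [List.getElem_append_left (by simpa [factorAt_length] using h)]
      rw [factorAt_getElem u i a n h]
    · have h2' : (factorAt u i a).length ≤ n := by simpa [factorAt_length] using h
      rw [List.getElem_append_right h2']
      have h3 : n - (factorAt u i a).length < b := by
        simp [factorAt_length]; omega
      have h4 := factorAt_getElem u (i + a) b (n - (factorAt u i a).length) h3
      rw [h4]
      simp only [factorAt_length]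
      congr 1
      omega

lemma factorAt_one (u : ℕ → A) (i : ℕ) : factorAt u i 1 = [u i] := by
  have : List.range 1 = [0] := rfl
  simp [factorAt, this]

lemma factorAt_zero (u : ℕ → A) (i : ℕ) : factorAt u i 0 = [] := by
  simp [factorAt]

lemma pref_mono (u : ℕ → A) {m m' : ℕ} (h : m ≤ m') :
    factorAt u 0 m <+: factorAt u 0 m' := by
  refine ⟨factorAt u (0 + m) (m' - m), ?_⟩
  rw [← factorAt_append]
  congr 1
  omega

def IsPref (u : ℕ → A) (q : List A) : Prop := factorAt u 0 q.length = q

lemma isPref_factorAt (u : ℕ → A) (m : ℕ) : IsPref u (factorAt u 0 m) := by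
  unfold IsPref
  rw [factorAt_length]

lemma isPref_iff (u : ℕ → A) (q : List A) :
    IsPref u q ↔ ∀ k (h : k < q.length), q[k] = u k := by
  constructor
  · intro hq k h
    have h0 : k < (factorAt u 0 q.length).length := by simpa [factorAt_length] using h
    have h1 := List.getElem_of_eq hq h0
    rw [← h1, factorAt_getElem u 0 q.length k h]
    simp
  · intro hq
    apply List.ext_getElem
    · simp [factorAt_length]
    · intro n h1 h2
      rw [factorAt_getElem u 0 q.length n (by simpa [factorAt_length] using h1)]
      rw [hq n h2]
      simp

lemma isPref_prefix {u : ℕ → A} {q q' : List A} (hq : IsPref u q) (hq' : IsPref u q')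
    (h : q.length ≤ q'.length) : q <+: q' := by
  rw [← hq, ← hq']
  exact pref_mono u h

lemma factorAt_eq_drop (u : ℕ → A) (i len : ℕ) :
    factorAt u i len = (factorAt u 0 (i + len)).drop i := by
  apply List.ext_getElem
  · simp [factorAt_length]
  · intro n h1 h2
    rw [List.getElem_drop]
    rw [factorAt_getElem u i len n (by simpa [factorAt_length] using h1)]
    rw [factorAt_getElem u 0 (i + len) (i + n)
      (by simp [factorAt_length] at h1 ⊢; omega)]
    simp

lemma factorAt_take (u : ℕ → A) {j m : ℕ} (h : j ≤ m) :
    (factorAt u 0 m).take j = factorAt u 0 j := by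
  have h1 := pref_mono u h
  rw [List.prefix_iff_eq_take] at h1
  rw [factorAt_length] at h1
  exact h1.symm

lemma inLang_iff (u : ℕ → A) (v : List A) :
    InLang u v ↔ ∃ m, v <:+: factorAt u 0 m := by
  constructor
  · rintro ⟨i, hi⟩
    refine ⟨i + v.length, ?_⟩
    refine List.IsSuffix.isInfix ⟨factorAt u 0 i, ?_⟩
    have hap := factorAt_append u 0 i v.length
    rw [zero_add] at hap
    rw [hap, hi]
  · rintro ⟨m, s, t, hst⟩
    refine ⟨s.length, ?_⟩
    have hm : s.length + v.length ≤ m := by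
      have := congrArg List.length hst
      simp [factorAt_length] at this
      omega
    unfold OccursAt
    rw [factorAt_eq_drop u s.length v.length, ← factorAt_take u hm, ← hst]
    rw [List.take_append_of_le_length (by simp)]
    rw [List.take_of_length_le (by simp)]
    exact List.drop_left

lemma inLang_of_infix {u : ℕ → A} {q v : List A} (hq : InLang u q) (hv : v <:+: q) :
    InLang u v := by
  rw [inLang_iff] at hq ⊢
  obtain ⟨m, hm⟩ := hq
  exact ⟨m, hv.trans hm⟩

lemma inLang_of_isPref {u : ℕ → A} {q : List A} (hq : IsPref u q) : InLang u q := by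
  rw [inLang_iff]
  exact ⟨q.length, by rw [hq]⟩

section Fixed

variable {u : ℕ → A} {φ : A → List A}

lemma applyM_factorAt_eq (u : ℕ → A) (φ : A → List A) (j : ℕ) :
    applyM φ (factorAt u 0 j) = (List.range j).flatMap fun i => φ (u i) := by
  unfold applyM factorAt
  rw [List.flatMap_map]
  simp

lemma isPref_applyM (hne : ∀ a, φ a ≠ []) (hfix : applyInf φ u = u)
    {q : List A} (hq : IsPref u q) : IsPref u (applyM φ q) := by
  rw [isPref_iff]
  intro k hk
  set m := q.length with hm
  have hqe : q = factorAt u 0 m := hq.symm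
  set M := max m (k + 1) with hM
  have hpre1 : applyM φ (factorAt u 0 m) <+: applyM φ (factorAt u 0 M) := by
    obtain ⟨t, ht⟩ := pref_mono u (le_max_left m (k+1))
    exact ⟨applyM φ t, by rw [← applyM_append, ht]⟩
  have hpre2 : applyM φ (factorAt u 0 (k+1)) <+: applyM φ (factorAt u 0 M) := by
    obtain ⟨t, ht⟩ := pref_mono u (le_max_right m (k+1))
    exact ⟨applyM φ t, by rw [← applyM_append, ht]⟩
  have hk2 : k < (applyM φ (factorAt u 0 (k+1))).length := by
    have := le_length_applyM φ hne (factorAt u 0 (k+1))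
    rw [factorAt_length] at this
    omega
  have hu : u k = (applyM φ (factorAt u 0 (k+1))).getD k (u 0) := by
    conv_lhs => rw [← hfix]
    unfold applyInf
    rw [applyM_factorAt_eq]
  rw [hu, List.getD_eq_getElem _ _ hk2]
  rw [hpre2.getElem hk2]
  have hk1 : k < (applyM φ q).length := hk
  rw [← hqe] at hpre1
  exact hpre1.getElem hk1

lemma isPref_powM_letter (hne : ∀ a, φ a ≠ []) (hfix : applyInf φ u = u) (n : ℕ) :
    IsPref u (powM φ n (u 0)) := by
  induction n with
  | zero =>
      show IsPref u [u 0]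
      rw [isPref_iff]
      intro k hk
      have hk0 : k = 0 := by simp at hk; omega
      subst hk0
      simp
  | succ n ih =>
      rw [powM_succ']
      exact isPref_applyM hne hfix ih

lemma isPref_applyM_powM (hne : ∀ a, φ a ≠ []) (hfix : applyInf φ u = u) (n : ℕ)
    {q : List A} (hq : IsPref u q) : IsPref u (applyM (powM φ n) q) := by
  induction n generalizing q with
  | zero => rw [applyM_powM_zero]; exact hq
  | succ n ih =>
      rw [powM_succ_applyM]
      exact ih (isPref_applyM hne hfix hq)

end Fixed

end PretAux

namespace PretAux

variable {A : Type*}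

lemma powM_infix_mem (φ : A → List A) (n k : ℕ) (a b : A) (h : b ∈ powM φ k a) :
    powM φ n b <:+: powM φ (n + k) a := by
  rw [powM_add]
  obtain ⟨s, t, hst⟩ := List.mem_iff_append.mp h
  refine ⟨applyM (powM φ n) s, applyM (powM φ n) t, ?_⟩
  rw [hst, show s ++ b :: t = s ++ [b] ++ t by simp]
  rw [applyM_append, applyM_append, applyM_singleton]

lemma factorAt_infix_window (u : ℕ → A) {i i' l' L : ℕ} (h1 : i ≤ i') (h2 : i' + l' ≤ i + L) :
    factorAt u i' l' <:+: factorAt u i L := by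
  refine ⟨factorAt u i (i' - i), factorAt u (i' + l') (i + L - (i' + l')), ?_⟩
  have hL : L = (i' - i) + (l' + (i + L - (i' + l'))) := by omega
  conv_rhs => rw [hL]
  rw [factorAt_append u i]
  have e : i + (i' - i) = i' := by omega
  rw [e, factorAt_append u i']
  simp [List.append_assoc]

section Prim

variable {φ : Fin 2 → List (Fin 2)}

lemma phi_ne_nil_of_prim {k : ℕ} (hk : ∀ a b : Fin 2, b ∈ powM φ k a) : ∀ a, φ a ≠ [] := by
  intro a hnil
  cases k with
  | zero =>
      have h0 := hk a 0
      have h1 := hk a 1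
      simp [powM_zero] at h0 h1
      exact absurd (h0.trans h1.symm) (by decide)
  | succ j =>
      have hemp : powM φ (j + 1) a = [] := by
        show applyM (powM φ j) (φ a) = []
        rw [hnil]
        rfl
      have hmem := hk a a
      rw [hemp] at hmem
      simp at hmem

lemma two_le_len_of_prim {k : ℕ} (hk : ∀ a b : Fin 2, b ∈ powM φ k a) (a : Fin 2) :
    2 ≤ (powM φ k a).length := by
  have h0 := hk a 0
  have h1 := hk a 1
  rcases hl : powM φ k a with _ | ⟨x, _ | ⟨y, t⟩⟩
  · rw [hl] at h0; simp at h0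
  · rw [hl] at h0 h1
    rw [List.mem_singleton] at h0 h1
    exact absurd (h0.trans h1.symm) (by decide)
  · simp

lemma pow_growth (hprim : PrimitiveM φ) : ∀ N : ℕ, ∃ n, ∀ a, N ≤ (powM φ n a).length := by
  obtain ⟨k, hk⟩ := hprim
  have h2 : ∀ a, 2 ≤ (powM φ k a).length := two_le_len_of_prim hk
  have key : ∀ s (a : Fin 2), s + 1 ≤ (powM φ (k * s) a).length := by
    intro s
    induction s with
    | zero => intro a; simp [powM_zero]
    | succ s ih =>
        intro a
        have he : k * (s + 1) = k + k * s := by ring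
        rw [he, powM_add]
        have hle := two_mul_le_length_applyM (powM φ k) h2 (powM φ (k * s) a)
        have := ih a
        omega
  intro N
  exact ⟨k * N, fun a => by have := key N a; omega⟩

variable {u : ℕ → Fin 2}

lemma block_step (N j : ℕ) :
    (applyM (powM φ N) (factorAt u 0 (j + 1))).length
      = (applyM (powM φ N) (factorAt u 0 j)).length + (powM φ N (u j)).length := by
  have hsplit : factorAt u 0 (j + 1) = factorAt u 0 j ++ [u j] := by
    rw [factorAt_append u 0 j 1, zero_add, factorAt_one]
  rw [hsplit, applyM_append, applyM_singleton, List.length_append]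

lemma block_decomp (hne : ∀ a, φ a ≠ []) (hfix : applyInf φ u = u) (N j : ℕ) :
    factorAt u ((applyM (powM φ N) (factorAt u 0 j)).length) (powM φ N (u j)).length
      = powM φ N (u j) := by
  have hP1 : IsPref u (applyM (powM φ N) (factorAt u 0 (j + 1))) :=
    isPref_applyM_powM hne hfix N (isPref_factorAt u (j + 1))
  have hP0 : IsPref u (applyM (powM φ N) (factorAt u 0 j)) :=
    isPref_applyM_powM hne hfix N (isPref_factorAt u j)
  unfold IsPref at hP1 hP0
  have hsplit : factorAt u 0 (j + 1) = factorAt u 0 j ++ [u j] := by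
    rw [factorAt_append u 0 j 1, zero_add, factorAt_one]
  rw [hsplit, applyM_append, applyM_singleton, List.length_append] at hP1
  rw [factorAt_append u 0 _ _, zero_add, hP0] at hP1
  exact List.append_cancel_left hP1

lemma unif_rec (hprim : PrimitiveM φ) (hfix : applyInf φ u = u) (m : ℕ) :
    ∃ L, ∀ i, factorAt u 0 m <:+: factorAt u i L := by
  obtain ⟨k, hk⟩ := hprim
  have hne := phi_ne_nil_of_prim hk
  obtain ⟨n₀, hn₀⟩ := pow_growth ⟨k, hk⟩ m
  have hpre : factorAt u 0 m <+: powM φ n₀ (u 0) := by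
    refine isPref_prefix (isPref_factorAt u m) (isPref_powM_letter hne hfix n₀) ?_
    rw [factorAt_length]
    exact hn₀ (u 0)
  have hblockin : ∀ a : Fin 2, factorAt u 0 m <:+: powM φ (n₀ + k) a := fun a =>
    (hpre.isInfix).trans (powM_infix_mem φ n₀ k a (u 0) (hk a (u 0)))
  set N := n₀ + k with hN
  set B := (powM φ N 0).length + (powM φ N 1).length with hB
  have hBle : ∀ a : Fin 2, (powM φ N a).length ≤ B := by
    intro a
    fin_cases a
    · exact Nat.le_add_right _ _
    · exact Nat.le_add_left _ _
  refine ⟨2 * B, fun i => ?_⟩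
  have hlb : ∀ j, j ≤ (applyM (powM φ N) (factorAt u 0 j)).length := by
    intro j
    have := le_length_powM φ hne N (factorAt u 0 j)
    rwa [factorAt_length] at this
  have hfind : ∃ j, i ≤ (applyM (powM φ N) (factorAt u 0 j)).length := ⟨i, hlb i⟩
  have hj1 : i ≤ (applyM (powM φ N) (factorAt u 0 (Nat.find hfind))).length :=
    Nat.find_spec hfind
  have hj2 : (applyM (powM φ N) (factorAt u 0 (Nat.find hfind))).length ≤ i + B := by
    rcases Nat.eq_zero_or_pos (Nat.find hfind) with h0 | hpos
    · rw [h0]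
      have hz : (applyM (powM φ N) (factorAt u 0 0)).length = 0 := by
        rw [factorAt_zero, applyM_nil]
        rfl
      omega
    · have hmin : ¬ i ≤ (applyM (powM φ N) (factorAt u 0 (Nat.find hfind - 1))).length :=
        Nat.find_min hfind (by omega)
      have hstep := block_step (φ := φ) (u := u) N (Nat.find hfind - 1)
      rw [show Nat.find hfind - 1 + 1 = Nat.find hfind by omega] at hstep
      have := hBle (u (Nat.find hfind - 1))
      omega
  set j := Nat.find hfind
  have hwin : factorAt u ((applyM (powM φ N) (factorAt u 0 j)).length)
      (powM φ N (u j)).length <:+: factorAt u i (2 * B) := by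
    refine factorAt_infix_window u hj1 ?_
    have := hBle (u j)
    omega
  rw [block_decomp hne hfix N j] at hwin
  exact (hblockin (u j)).trans hwin

end Prim

end PretAux

namespace PretAux

variable {ψ φ : Fin 2 → List (Fin 2)} {w x : List (Fin 2)} {u : ℕ → Fin 2}

lemma pret_key (hψ : IsPretWithMarker ψ w) (a : Fin 2) : ψ a ++ w = w ++ (ψ a).reverse := by
  obtain ⟨-, hw, h⟩ := hψ
  have hpal := (h a).1
  calc ψ a ++ w = (ψ a ++ w).reverse := hpal.symm
    _ = w.reverse ++ (ψ a).reverse := by rw [List.reverse_append]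
    _ = w ++ (ψ a).reverse := by rw [hw]

lemma pret_ne (hψ : IsPretWithMarker ψ w) (a : Fin 2) : ψ a ≠ [] := by
  have h := (hψ.2.2 a).2.2
  intro hnil
  simp [hnil] at h

lemma psi_images (hφne : ∀ a, φ a ≠ []) (hψne : ∀ a, ψ a ≠ [])
    (hfix : applyInf φ u = u)
    (hcase : (∀ a, ψ a ++ x = x ++ φ a) ∨ (∀ a, φ a ++ x = x ++ ψ a)) (n : ℕ) :
    ∃ i₀ : ℕ, (∀ m, InLang u (applyM (powM ψ n) (factorAt u i₀ m))) ∧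
      (∀ v : List (Fin 2), (applyM (powM ψ n) v).length = (applyM (powM φ n) v).length) := by
  rcases hcase with hc | hc
  · obtain ⟨yn, hyn⟩ := powM_conj (f := ψ) (g := φ) hc n
    have hlen : ∀ v : List (Fin 2),
        (applyM (powM ψ n) v).length = (applyM (powM φ n) v).length := by
      intro v
      have h := congrArg List.length (hyn v)
      simp only [List.length_append] at h
      omega
    refine ⟨yn.length, fun m => ?_, hlen⟩
    have hpq : factorAt u 0 (yn.length + m)
        = factorAt u 0 yn.length ++ factorAt u yn.length m := by
      rw [factorAt_append u 0 yn.length m, zero_add]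
    have hq : IsPref u (applyM (powM φ n) (factorAt u 0 (yn.length + m))) :=
      isPref_applyM_powM hφne hfix n (isPref_factorAt u (yn.length + m))
    have hysuf : yn <:+ applyM (powM φ n) (factorAt u 0 yn.length) := by
      apply suf_of_conj (hyn (factorAt u 0 yn.length)).symm
      have h := le_length_powM φ hφne n (factorAt u 0 yn.length)
      rwa [factorAt_length] at h
    obtain ⟨s, hs⟩ := hysuf
    refine inLang_of_infix (inLang_of_isPref hq) ⟨s, yn, ?_⟩
    rw [hpq, applyM_append, ← hs]
    calc s ++ applyM (powM ψ n) (factorAt u yn.length m) ++ yn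
        = s ++ (applyM (powM ψ n) (factorAt u yn.length m) ++ yn) := by
          simp [List.append_assoc]
      _ = s ++ (yn ++ applyM (powM φ n) (factorAt u yn.length m)) := by rw [hyn]
      _ = (s ++ yn) ++ applyM (powM φ n) (factorAt u yn.length m) := by
          simp [List.append_assoc]
  · obtain ⟨xn, hxn⟩ := powM_conj (f := φ) (g := ψ) hc n
    have hlen : ∀ v : List (Fin 2),
        (applyM (powM ψ n) v).length = (applyM (powM φ n) v).length := by
      intro v
      have h := congrArg List.length (hxn v)
      simp only [List.length_append] at h
      omega
    refine ⟨0, fun m => ?_, hlen⟩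
    have hq : IsPref u (applyM (powM φ n) (factorAt u 0 (m + xn.length))) :=
      isPref_applyM_powM hφne hfix n (isPref_factorAt u (m + xn.length))
    have hsplit : factorAt u 0 (m + xn.length)
        = factorAt u 0 m ++ factorAt u m xn.length := by
      rw [factorAt_append u 0 m xn.length, zero_add]
    have hxpre : xn <+: applyM (powM φ n) (factorAt u m xn.length) := by
      apply pre_of_conj (hxn (factorAt u m xn.length)).symm
      have h := le_length_powM φ hφne n (factorAt u m xn.length)
      rwa [factorAt_length] at h
    obtain ⟨r, hr⟩ := hxpre
    refine inLang_of_infix (inLang_of_isPref hq) ⟨xn, r, ?_⟩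
    rw [hsplit, applyM_append, ← hr]
    calc xn ++ applyM (powM ψ n) (factorAt u 0 m) ++ r
        = (xn ++ applyM (powM ψ n) (factorAt u 0 m)) ++ r := by simp [List.append_assoc]
      _ = (applyM (powM φ n) (factorAt u 0 m) ++ xn) ++ r := by rw [← hxn]
      _ = applyM (powM φ n) (factorAt u 0 m) ++ (xn ++ r) := by simp [List.append_assoc]

lemma pal_long (hprim : PrimitiveM φ) (hfix : applyInf φ u = u)
    (hψ : IsPretWithMarker ψ w)
    (hcase : (∀ a, ψ a ++ x = x ++ φ a) ∨ (∀ a, φ a ++ x = x ++ ψ a)) :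
    ∀ N, ∃ P : List (Fin 2), InLang u P ∧ P.reverse = P ∧ N ≤ P.length := by
  intro N
  obtain ⟨k, hk⟩ := hprim
  have hφne := phi_ne_nil_of_prim hk
  have hψne := pret_ne hψ
  have hw : w.reverse = w := hψ.2.1
  have hkey := pret_key hψ
  obtain ⟨n, hn⟩ := pow_growth ⟨k, hk⟩ N
  obtain ⟨wn, hwrev, hwpre⟩ := marker_pow hw hkey n
  obtain ⟨i₀, hIL, hLEN⟩ := psi_images hφne hψne hfix hcase n
  refine ⟨powM ψ n (u i₀) ++ wn, ?_, ?_, ?_⟩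
  · have hm := hIL (1 + wn.length)
    have hsplit : factorAt u i₀ (1 + wn.length)
        = [u i₀] ++ factorAt u (i₀ + 1) wn.length := by
      rw [factorAt_append u i₀ 1 wn.length, factorAt_one]
    rw [hsplit, applyM_append, applyM_singleton] at hm
    have hwp : wn <+: applyM (powM ψ n) (factorAt u (i₀ + 1) wn.length) := by
      apply prefix_of_prefix_append (hwpre _)
      have h := le_length_powM ψ hψne n (factorAt u (i₀ + 1) wn.length)
      rwa [factorAt_length] at h
    obtain ⟨r, hr⟩ := hwp
    refine inLang_of_infix hm ?_
    have hpre : powM ψ n (u i₀) ++ wn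
        <+: powM ψ n (u i₀) ++ applyM (powM ψ n) (factorAt u (i₀ + 1) wn.length) :=
      ⟨r, by rw [← hr]; simp [List.append_assoc]⟩
    exact hpre.isInfix
  · have h := hwrev [u i₀]
    simpa [applyM_singleton] using h
  · have h1 : (powM ψ n (u i₀)).length = (powM φ n (u i₀)).length := by
      have h := hLEN [u i₀]
      simpa [applyM_singleton] using h
    have h2 := hn (u i₀)
    simp only [List.length_append]
    omega

end PretAux

open PretAux in
/-- A fixed point of a primitive binary morphism conjugated to a
morphism in Class `P_ret` has language closed under reversal. -/
theorem pret_binary_fixed_point_closed {φ : Fin 2 → List (Fin 2)}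
    (hprim : PrimitiveM φ)
    (hconj : ∃ (ψ : Fin 2 → List (Fin 2)) (w x : List (Fin 2)),
      IsPretWithMarker ψ w ∧
        ((∀ a, ψ a ++ x = x ++ φ a) ∨ (∀ a, φ a ++ x = x ++ ψ a)))
    (u : ℕ → Fin 2) (hfix : applyInf φ u = u) :
    ClosedUnderReversal u := by
  
  obtain ⟨ψ, w, x, hψ, hcase⟩ := hconj
  intro v hv
  obtain ⟨m, hvm⟩ := (inLang_iff u v).mp hv
  obtain ⟨L, hL⟩ := unif_rec hprim hfix m
  obtain ⟨P, hPlang, hPrev, hPlen⟩ := pal_long hprim hfix hψ hcase L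
  obtain ⟨i, hi⟩ := hPlang
  have h1 : factorAt u i L <+: P := by
    rw [← hi]
    refine ⟨factorAt u (i + L) (P.length - L), ?_⟩
    rw [← factorAt_append]
    congr 1
    omega
  have hvP : v <:+: P := (hvm.trans (hL i)).trans h1.isInfix
  have hrevP : v.reverse <:+: P := by
    rw [← hPrev]
    exact List.reverse_infix.mpr hvP
  exact inLang_of_infix ⟨i, hi⟩ hrevP
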